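/- Let φ: ℙ¹ → ℙ¹ be a rational map of degree d ≥ 2 defined over a number field K, and let f₀, f₁ ∈ K[x₀,x₁] be a homogeneous presentation of φ of degree d in which at least one coefficient equals 1. Then the homogeneous resultant D = Res(f₀,f₁) satisfies h(D) ≤ (2d+2)·h(φ) + C·d·log d for an absolute constant C > 0. -/

import Mathlib

open NumberField IsDedekindDomain Polynomial

/-- The places of a number field `K`: infinite (archimedean) places and
finite places (nonzero prime ideals of the ring of integers). -/
abbrev NFPlace (K : Type) [Field K] [NumberField K] : Type :=
  NumberField.InfinitePlace K ⊕ IsDedekindDomain.HeightOneSpectrum (𝓞 K)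

open scoped Classical in
/-- The normalized absolute value attached to a place of `K`: the archimedean absolute
value for infinite places, and `(N v)^{-ord_v(x)}` for a finite place `v`. -/
noncomputable def placeAbs (K : Type) [Field K] [NumberField K] : NFPlace K → K → ℝ
  | Sum.inl w, x => w x
  | Sum.inr v, x =>
      if hx : x = 0 then 0
      else (Ideal.absNorm v.asIdeal : ℝ) ^
        (Multiplicative.toAdd (WithZero.unzero (((v.valuation K).ne_zero_iff).mpr hx)))

/-- The weight of a place, chosen so that `placeWeight v * log (placeAbs v x)` equals
`N_v log |x|_v` in the standard normalization (for which the product formula holds). -/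
noncomputable def placeWeight (K : Type) [Field K] [NumberField K] : NFPlace K → ℝ
  | Sum.inl w => (w.mult : ℝ) / (Module.finrank ℚ K : ℝ)
  | Sum.inr _ => 1 / (Module.finrank ℚ K : ℝ)

/-- A place is archimedean iff it is an infinite place. -/
def NFPlace.IsArch {K : Type} [Field K] [NumberField K] (v : NFPlace K) : Prop := v.isLeft

/-- The absolute logarithmic Weil height of an element of a number field. -/
noncomputable def heightK (K : Type) [Field K] [NumberField K] (x : K) : ℝ :=
  ∑ᶠ v : NFPlace K, placeWeight K v * max 0 (Real.log (placeAbs K v x))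

/-- The absolute logarithmic Weil height of a point of `ℙ¹(K)`. -/
noncomputable def heightP1 (K : Type) [Field K] [NumberField K]
    (x : Projectivization K (Fin 2 → K)) : ℝ :=
  ∑ᶠ v : NFPlace K, placeWeight K v *
    Real.log (max (placeAbs K v (x.rep 0)) (placeAbs K v (x.rep 1)))

/-- Evaluation of the binary form of degree `d` with coefficients `c`:
`∑ i, c i * x₀^i * x₁^(d-i)`. -/
def evalForm {R : Type} [CommRing R] (d : ℕ) (c : Fin (d+1) → R) (x : Fin 2 → R) : R :=
  ∑ i : Fin (d+1), c i * x 0 ^ (i : ℕ) * x 1 ^ (d - (i : ℕ))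

/-- A rational self-map of ℙ¹ of (exact) degree `d`, presented by a pair of homogeneous
degree-`d` binary forms with no common projective zero over any field extension
(equivalently, over an algebraic closure). -/
structure RatMap (K : Type) [Field K] (d : ℕ) where
  a : Fin (d+1) → K
  b : Fin (d+1) → K
  nondeg : ∀ (L : Type) [Field L] [Algebra K L] (x : Fin 2 → L),
    evalForm d (fun i => algebraMap K L (a i)) x = 0 →
    evalForm d (fun i => algebraMap K L (b i)) x = 0 → x = 0

namespace RatMap

variable {K : Type} [Field K] {d : ℕ}

/-- The induced self-map of `ℙ¹(L)` for any field extension `L` of `K`. -/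
noncomputable def mapP (φ : RatMap K d) (L : Type) [Field L] [Algebra K L]
    (x : Projectivization L (Fin 2 → L)) : Projectivization L (Fin 2 → L) :=
  Projectivization.mk L
    ![evalForm d (fun i => algebraMap K L (φ.a i)) x.rep,
      evalForm d (fun i => algebraMap K L (φ.b i)) x.rep]
    (by
      intro h
      have h0 := congrFun h 0
      have h1 := congrFun h 1
      simp only [Matrix.cons_val_zero, Matrix.cons_val_one, Matrix.head_cons,
        Pi.zero_apply] at h0 h1
      exact x.rep_nonzero (φ.nondeg L x.rep h0 h1))

/-- The induced self-map of `ℙ¹(K)`. -/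
noncomputable def toFun (φ : RatMap K d) :
    Projectivization K (Fin 2 → K) → Projectivization K (Fin 2 → K) :=
  φ.mapP K

/-- The height `h(φ)` of a rational map: the Weil height of its coefficient point
in `ℙ^{2d+1}`. -/
noncomputable def height [NumberField K] (φ : RatMap K d) : ℝ :=
  ∑ᶠ v : NFPlace K, placeWeight K v *
    Real.log ((Finset.univ.sup (fun i : Fin (d+1) ⊕ Fin (d+1) =>
      Real.toNNReal (placeAbs K v (Sum.elim φ.a φ.b i))) : NNReal) : ℝ)

end RatMap

/-- The natural inclusion `ℙ¹(K) → ℙ¹(L)` for a field extension `L/K`. -/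
noncomputable def P1Map (K : Type) [Field K] (L : Type) [Field L] [Algebra K L]
    (x : Projectivization K (Fin 2 → K)) : Projectivization L (Fin 2 → L) :=
  Projectivization.mk L (fun i => algebraMap K L (x.rep i))
    (by
      intro h
      apply x.rep_nonzero
      funext i
      have := congrFun h i
      simpa using this)

/-- The canonical height of a point of `ℙ¹(L)` for a number field `L ⊇ K`,
`ĥ_φ(x) = lim_n h(φⁿ(x))/dⁿ`. -/
noncomputable def canHeightAt {K : Type} [Field K] {d : ℕ} (φ : RatMap K d)
    (L : Type) [Field L] [NumberField L] [Algebra K L]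
    (x : Projectivization L (Fin 2 → L)) : ℝ :=
  Filter.limUnder Filter.atTop (fun n : ℕ => heightP1 L ((φ.mapP L)^[n] x) / (d : ℝ) ^ n)

/-- The canonical height `ĥ_φ` on `ℙ¹(K)`. -/
noncomputable def canHeight {K : Type} [Field K] [NumberField K] {d : ℕ} (φ : RatMap K d)
    (x : Projectivization K (Fin 2 → K)) : ℝ :=
  canHeightAt φ K x

/-- `α` is not preperiodic for `φ`: its forward orbit is infinite. -/
def NonPreperiodic {K : Type} [Field K] {d : ℕ} (φ : RatMap K d)
    (α : Projectivization K (Fin 2 → K)) : Prop :=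
  (Set.range fun n : ℕ => (φ.toFun)^[n] α).Infinite

/-- `β` is not exceptional for `φ`: the number of `n`-th preimages of `β` in `ℙ¹(K̄)`
tends to infinity with `n`. -/
def NonExceptional {K : Type} [Field K] [NumberField K] {d : ℕ} (φ : RatMap K d)
    (β : Projectivization K (Fin 2 → K)) : Prop :=
  Filter.Tendsto
    (fun n : ℕ => Nat.card {x : Projectivization (AlgebraicClosure K) (Fin 2 → AlgebraicClosure K) //
      (φ.mapP (AlgebraicClosure K))^[n] x = P1Map K (AlgebraicClosure K) β})
    Filter.atTop Filter.atTop

/-- `S` contains all the archimedean places of `K`. -/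
def ContainsArch (K : Type) [Field K] [NumberField K] (S : Finset (NFPlace K)) : Prop :=
  ∀ w : NumberField.InfinitePlace K, Sum.inl w ∈ S

/-- `x` and `y` in `ℙ¹(K)` are `S`-integral relative to each other: at every finite place
outside `S` their reductions are distinct, i.e. the `v`-adic logarithmic chordal distance
vanishes: `|x₀y₁ - x₁y₀|_v = max(|x₀|_v,|x₁|_v) · max(|y₀|_v,|y₁|_v)`. -/
def SIntegralRel {K : Type} [Field K] [NumberField K] (S : Finset (NFPlace K))
    (x y : Projectivization K (Fin 2 → K)) : Prop :=
  ∀ v : IsDedekindDomain.HeightOneSpectrum (𝓞 K), (Sum.inr v : NFPlace K) ∉ S →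
    placeAbs K (Sum.inr v) (x.rep 0 * y.rep 1 - x.rep 1 * y.rep 0) =
      max (placeAbs K (Sum.inr v) (x.rep 0)) (placeAbs K (Sum.inr v) (x.rep 1)) *
      max (placeAbs K (Sum.inr v) (y.rep 0)) (placeAbs K (Sum.inr v) (y.rep 1))

/-- `log_d⁺ x = max(0, log x / log d)`. -/
noncomputable def logdPlus (d : ℕ) (x : ℝ) : ℝ := max 0 (Real.log x / Real.log d)

/-- The Sylvester matrix of the pair of degree-`d` binary forms with coefficient
vectors `a` and `b` (coefficients `c i` of `x₀^i x₁^{d-i}`). -/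
def sylvester {K : Type} [Field K] {d : ℕ} (a b : Fin (d+1) → K) :
    Matrix (Fin (2*d)) (Fin (2*d)) K :=
  Matrix.of fun i j =>
    if (i : ℕ) < d then
      if h : (i : ℕ) ≤ (j : ℕ) ∧ (j : ℕ) - (i : ℕ) ≤ d then
        a ⟨d - ((j : ℕ) - (i : ℕ)), by omega⟩ else 0
    else
      if h : (i : ℕ) - d ≤ (j : ℕ) ∧ (j : ℕ) - ((i : ℕ) - d) ≤ d then
        b ⟨d - ((j : ℕ) - ((i : ℕ) - d)), by omega⟩ else 0

/-- The homogeneous resultant of the pair of degree-`d` binary forms with coefficient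
vectors `a` and `b`, as the determinant of the Sylvester matrix. -/
noncomputable def resultantForms {K : Type} [Field K] {d : ℕ} (a b : Fin (d+1) → K) : K :=
  (sylvester a b).det


section ResultantAux

namespace ResAux

open Real

variable {K : Type} [Field K] [NumberField K]

lemma one_lt_normNN (v : HeightOneSpectrum (𝓞 K)) :
    1 < (Ideal.absNorm v.asIdeal : NNReal) := by
  have h0 : Ideal.absNorm v.asIdeal ≠ 0 := by
    rw [Ne, Ideal.absNorm_eq_zero_iff]
    exact v.ne_bot
  have h1 : Ideal.absNorm v.asIdeal ≠ 1 := by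
    rw [Ne, Ideal.absNorm_eq_one_iff]
    exact v.isPrime.ne_top
  have : 1 < Ideal.absNorm v.asIdeal := by omega
  exact_mod_cast this

lemma normNN_ne_zero (v : HeightOneSpectrum (𝓞 K)) :
    (Ideal.absNorm v.asIdeal : NNReal) ≠ 0 :=
  (zero_lt_one.trans (one_lt_normNN v)).ne'

/-- The `v`-adic absolute value as a `MonoidWithZeroHom` into `ℝ≥0`. -/
noncomputable def fAbs (v : HeightOneSpectrum (𝓞 K)) : K →*₀ NNReal :=
  (WithZeroMulInt.toNNReal (normNN_ne_zero v)).comp (v.valuation K).toMonoidWithZeroHom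

lemma fAbs_def (v : HeightOneSpectrum (𝓞 K)) (x : K) :
    fAbs v x = WithZeroMulInt.toNNReal (normNN_ne_zero v) (v.valuation K x) := rfl

lemma placeAbs_inr (v : HeightOneSpectrum (𝓞 K)) (x : K) :
    placeAbs K (Sum.inr v) x = (fAbs v x : ℝ) := by
  by_cases hx : x = 0
  · subst hx
    simp [placeAbs, fAbs_def, map_zero]
  · have hvx : v.valuation K x ≠ 0 := ((v.valuation K).ne_zero_iff).mpr hx
    rw [placeAbs, dif_neg hx, fAbs_def, WithZeroMulInt.toNNReal_neg_apply _ hvx]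
    push_cast
    rfl

lemma placeAbs_inl (w : NumberField.InfinitePlace K) (x : K) :
    placeAbs K (Sum.inl w) x = w x := rfl

lemma placeAbs_nonneg (v : NFPlace K) (x : K) : 0 ≤ placeAbs K v x := by
  cases v with
  | inl w => exact w.1.nonneg x
  | inr v => rw [placeAbs_inr]; exact NNReal.coe_nonneg _

lemma placeAbs_zero (v : NFPlace K) : placeAbs K v (0 : K) = 0 := by
  cases v with
  | inl w => exact map_zero w
  | inr v => rw [placeAbs_inr, map_zero]; rfl

lemma placeWeight_nonneg (v : NFPlace K) : 0 ≤ placeWeight K v := by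
  cases v with
  | inl w => exact div_nonneg (Nat.cast_nonneg _) (Nat.cast_nonneg _)
  | inr v => exact div_nonneg zero_le_one (Nat.cast_nonneg _)

lemma sum_arch_weight :
    ∑ w : NumberField.InfinitePlace K, placeWeight K (Sum.inl w) = 1 := by
  have h := NumberField.InfinitePlace.sum_mult_eq (K := K)
  have hr : (0 : ℝ) < (Module.finrank ℚ K : ℝ) := by
    exact_mod_cast Module.finrank_pos
  simp only [placeWeight]
  rw [← Finset.sum_div, div_eq_one_iff_eq hr.ne']
  exact_mod_cast h

lemma maxlog_mono {x y : ℝ} (hx : 0 ≤ x) (h : x ≤ y) :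
    max 0 (Real.log x) ≤ max 0 (Real.log y) := by
  rcases eq_or_lt_of_le hx with h0 | h0
  · simp [← h0, Real.log_zero]
  · exact max_le_max le_rfl (Real.log_le_log h0 h)

lemma fAbs_neg (v : HeightOneSpectrum (𝓞 K)) (x : K) : fAbs v (-x) = fAbs v x := by
  rw [fAbs_def, fAbs_def, Valuation.map_neg]

lemma fAbs_add_le (v : HeightOneSpectrum (𝓞 K)) (x y : K) :
    fAbs v (x + y) ≤ max (fAbs v x) (fAbs v y) := by
  have h := (v.valuation K).map_add x y
  have hmono := (WithZeroMulInt.toNNReal_strictMono (one_lt_normNN v)).monotone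
  calc fAbs v (x + y) ≤ WithZeroMulInt.toNNReal (normNN_ne_zero v)
        (max (v.valuation K x) (v.valuation K y)) := hmono h
    _ = max (fAbs v x) (fAbs v y) := hmono.map_max

lemma fAbs_sum_le {ι : Type*} (v : HeightOneSpectrum (𝓞 K)) (s : Finset ι) (f : ι → K)
    {B : NNReal} (h : ∀ i ∈ s, fAbs v (f i) ≤ B) : fAbs v (∑ i ∈ s, f i) ≤ B := by
  induction s using Finset.cons_induction with
  | empty => simp [map_zero]
  | cons a s ha ih =>
      rw [Finset.sum_cons]
      refine (fAbs_add_le v _ _).trans (max_le (h a (Finset.mem_cons_self a s)) (ih ?_))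
      exact fun i hi => h i (Finset.mem_cons_of_mem hi)

lemma fAbs_det_le {n : ℕ} (v : HeightOneSpectrum (𝓞 K)) (A : Matrix (Fin n) (Fin n) K)
    {M : NNReal} (h : ∀ i j, fAbs v (A i j) ≤ M) : fAbs v A.det ≤ M ^ n := by
  rw [Matrix.det_apply]
  refine fAbs_sum_le v _ _ (fun σ _ => ?_)
  have h1 : fAbs v (Equiv.Perm.sign σ • ∏ i, A (σ i) i) = fAbs v (∏ i, A (σ i) i) := by
    rcases Int.units_eq_one_or (Equiv.Perm.sign σ) with hs | hs <;>
      simp [hs, Units.smul_def, fAbs_neg]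
  rw [h1, map_prod]
  calc ∏ i, fAbs v (A (σ i) i) ≤ ∏ _i : Fin n, M :=
        Finset.prod_le_prod' (fun i _ => h (σ i) i)
    _ = M ^ n := by simp

lemma fAbs_finite_support {x : K} (hx : x ≠ 0) :
    {v : HeightOneSpectrum (𝓞 K) | fAbs v x ≠ 1}.Finite := by
  obtain ⟨⟨r, s⟩, rfl⟩ := IsLocalization.mk'_surjective (nonZeroDivisors (𝓞 K)) x
  have hr : r ≠ 0 := by
    rintro rfl
    dsimp only at hx
    rw [IsLocalization.mk'_zero] at hx
    exact hx rfl
  have hs : (s : 𝓞 K) ≠ 0 := nonZeroDivisors.coe_ne_zero s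
  have hns : (Ideal.span {(s : 𝓞 K)} : Ideal (𝓞 K)) ≠ 0 := by
    rwa [Ne, Submodule.zero_eq_bot, Ideal.span_singleton_eq_bot]
  have hnr : (Ideal.span {r} : Ideal (𝓞 K)) ≠ 0 := by
    rwa [Ne, Submodule.zero_eq_bot, Ideal.span_singleton_eq_bot]
  refine Set.Finite.subset ((Ideal.finite_factors hnr).union (Ideal.finite_factors hns)) ?_
  intro v hv
  by_contra hcon
  rw [Set.mem_union, Set.mem_setOf_eq, Set.mem_setOf_eq] at hcon
  push_neg at hcon
  have h1 : v.intValuation r = 1 := by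
    rcases (v.intValuation_le_one r).lt_or_eq with hlt | heq
    · exact absurd ((v.intValuation_lt_one_iff_dvd r).mp hlt) hcon.1
    · exact heq
  have h2 : v.intValuation (s : 𝓞 K) = 1 := by
    rcases (v.intValuation_le_one (s : 𝓞 K)).lt_or_eq with hlt | heq
    · exact absurd ((v.intValuation_lt_one_iff_dvd _).mp hlt) hcon.2
    · exact heq
  apply hv
  rw [fAbs_def, IsDedekindDomain.HeightOneSpectrum.valuation_of_mk', h1, h2, div_one, map_one]

lemma infPlace_neg (w : NumberField.InfinitePlace K) (x : K) : w (-x) = w x := w.1.map_neg x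

lemma arch_det_le {n : ℕ} (w : NumberField.InfinitePlace K) (A : Matrix (Fin n) (Fin n) K)
    {M : ℝ} (h : ∀ i j, w (A i j) ≤ M) :
    w A.det ≤ ((Nat.factorial n : ℕ) : ℝ) * M ^ n := by
  rw [Matrix.det_apply]
  calc w (∑ σ : Equiv.Perm (Fin n), Equiv.Perm.sign σ • ∏ i, A (σ i) i)
      ≤ ∑ σ : Equiv.Perm (Fin n), w (Equiv.Perm.sign σ • ∏ i, A (σ i) i) :=
        w.1.sum_le _ _
    _ ≤ ∑ _σ : Equiv.Perm (Fin n), M ^ n := by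
        refine Finset.sum_le_sum (fun σ _ => ?_)
        have h1 : w (Equiv.Perm.sign σ • ∏ i, A (σ i) i) = w (∏ i, A (σ i) i) := by
          rcases Int.units_eq_one_or (Equiv.Perm.sign σ) with hs | hs <;>
            simp [hs, Units.smul_def, infPlace_neg]
        rw [h1, map_prod]
        calc ∏ i, w (A (σ i) i) ≤ ∏ _i : Fin n, M :=
              Finset.prod_le_prod (fun i _ => AbsoluteValue.nonneg _ _) (fun i _ => h (σ i) i)
          _ = M ^ n := by simp
    _ = ((Nat.factorial n : ℕ) : ℝ) * M ^ n := by
        rw [Finset.sum_const, Finset.card_univ, Fintype.card_perm, Fintype.card_fin,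
          nsmul_eq_mul]

variable {d : ℕ} (φ : RatMap K d)

/-- The sup of the absolute values of the coefficients of `φ` at a place `v`. -/
noncomputable def supC (v : NFPlace K) : NNReal :=
  Finset.univ.sup (fun i : Fin (d+1) ⊕ Fin (d+1) =>
    Real.toNNReal (placeAbs K v (Sum.elim φ.a φ.b i)))

lemma height_eq : φ.height = ∑ᶠ v : NFPlace K,
    placeWeight K v * Real.log ((supC φ v : NNReal) : ℝ) := rfl

lemma toNNReal_placeAbs_inr (v : HeightOneSpectrum (𝓞 K)) (x : K) :
    Real.toNNReal (placeAbs K (Sum.inr v) x) = fAbs v x := by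
  rw [placeAbs_inr, Real.toNNReal_coe]

lemma placeAbs_le_supC (v : NFPlace K) (i : Fin (d+1) ⊕ Fin (d+1)) :
    placeAbs K v (Sum.elim φ.a φ.b i) ≤ (supC φ v : ℝ) := by
  have h := Finset.le_sup (f := fun i => Real.toNNReal (placeAbs K v (Sum.elim φ.a φ.b i)))
    (Finset.mem_univ i)
  rw [← Real.coe_toNNReal (placeAbs K v _) (placeAbs_nonneg v _)]
  exact NNReal.coe_le_coe.mpr h

lemma fAbs_le_supC (v : HeightOneSpectrum (𝓞 K)) (i : Fin (d+1) ⊕ Fin (d+1)) :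
    fAbs v (Sum.elim φ.a φ.b i) ≤ supC φ (Sum.inr v) := by
  rw [← toNNReal_placeAbs_inr]
  exact Finset.le_sup (f := fun i => Real.toNNReal (placeAbs K (Sum.inr v) (Sum.elim φ.a φ.b i)))
    (Finset.mem_univ i)

lemma one_le_supC (h : ∃ i : Fin (d+1), φ.a i = 1 ∨ φ.b i = 1) (v : NFPlace K) :
    1 ≤ (supC φ v : ℝ) := by
  have hone : placeAbs K v (1 : K) = 1 := by
    cases v with
    | inl w => exact map_one w
    | inr v => rw [placeAbs_inr, map_one]; rfl
  obtain ⟨i, hi | hi⟩ := h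
  · have := placeAbs_le_supC φ v (Sum.inl i)
    rwa [Sum.elim_inl, hi, hone] at this
  · have := placeAbs_le_supC φ v (Sum.inr i)
    rwa [Sum.elim_inr, hi, hone] at this

lemma supC_eq_one (h : ∃ i : Fin (d+1), φ.a i = 1 ∨ φ.b i = 1)
    (v : HeightOneSpectrum (𝓞 K))
    (hv : ∀ i, Sum.elim φ.a φ.b i ≠ 0 → fAbs v (Sum.elim φ.a φ.b i) = 1) :
    (supC φ (Sum.inr v) : ℝ) = 1 := by
  refine le_antisymm ?_ (one_le_supC φ h _)
  have hle : supC φ (Sum.inr v) ≤ 1 := by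
    refine Finset.sup_le (fun i _ => ?_)
    by_cases h0 : Sum.elim φ.a φ.b i = 0
    · rw [h0, placeAbs_zero]; simp
    · rw [toNNReal_placeAbs_inr, hv i h0]
  exact_mod_cast hle

lemma sylvester_cases (a b : Fin (d+1) → K) (i j : Fin (2*d)) :
    sylvester a b i j = 0 ∨ (∃ k, sylvester a b i j = a k) ∨ (∃ k, sylvester a b i j = b k) := by
  unfold _root_.sylvester
  simp only [Matrix.of_apply]
  split_ifs with h1 h2 h3
  · exact Or.inr (Or.inl ⟨_, rfl⟩)
  · exact Or.inl rfl
  · exact Or.inr (Or.inr ⟨_, rfl⟩)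
  · exact Or.inl rfl

lemma arch_entry_le (w : NumberField.InfinitePlace K) (i j : Fin (2*d)) :
    w (sylvester φ.a φ.b i j) ≤ (supC φ (Sum.inl w) : ℝ) := by
  rcases sylvester_cases φ.a φ.b i j with h | ⟨k, h⟩ | ⟨k, h⟩
  · rw [h, map_zero]; exact NNReal.coe_nonneg _
  · rw [h]; exact placeAbs_le_supC φ (Sum.inl w) (Sum.inl k)
  · rw [h]; exact placeAbs_le_supC φ (Sum.inl w) (Sum.inr k)

lemma fin_entry_le (v : HeightOneSpectrum (𝓞 K)) (i j : Fin (2*d)) :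
    fAbs v (sylvester φ.a φ.b i j) ≤ supC φ (Sum.inr v) := by
  rcases sylvester_cases φ.a φ.b i j with h | ⟨k, h⟩ | ⟨k, h⟩
  · rw [h, map_zero]; exact zero_le
  · rw [h]; exact fAbs_le_supC φ v (Sum.inl k)
  · rw [h]; exact fAbs_le_supC φ v (Sum.inr k)

lemma key_bound (hc : ∃ i : Fin (d+1), φ.a i = 1 ∨ φ.b i = 1) (v : NFPlace K) :
    placeWeight K v * max 0 (Real.log (placeAbs K v (resultantForms φ.a φ.b))) ≤
      (2 * d : ℝ) * (placeWeight K v * Real.log ((supC φ v : NNReal) : ℝ)) +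
      (if v.isLeft then
        placeWeight K v * Real.log ((Nat.factorial (2*d) : ℕ) : ℝ) else 0) := by
  have hM1 : 1 ≤ (supC φ v : ℝ) := one_le_supC φ hc v
  have hM0 : (0 : ℝ) < (supC φ v : ℝ) := lt_of_lt_of_le one_pos hM1
  have hw := placeWeight_nonneg (K := K) v
  have hlogM : 0 ≤ Real.log (supC φ v : ℝ) := Real.log_nonneg hM1
  have hfact1 : (1 : ℝ) ≤ ((Nat.factorial (2*d) : ℕ) : ℝ) := by
    exact_mod_cast Nat.one_le_iff_ne_zero.mpr (Nat.factorial_pos (2*d)).ne'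
  cases v with
  | inl w =>
      simp only [Sum.isLeft_inl, if_true]
      have hdet : w (resultantForms φ.a φ.b) ≤
          ((Nat.factorial (2*d) : ℕ) : ℝ) * (supC φ (Sum.inl w) : ℝ) ^ (2*d) :=
        arch_det_le w _ (arch_entry_le φ w)
      have harg : (1 : ℝ) ≤ ((Nat.factorial (2*d) : ℕ) : ℝ) * (supC φ (Sum.inl w) : ℝ) ^ (2*d) :=
        one_le_mul_of_one_le_of_one_le hfact1 (one_le_pow₀ hM1)
      have hmax : max 0 (Real.log (placeAbs K (Sum.inl w) (resultantForms φ.a φ.b))) ≤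
          Real.log ((Nat.factorial (2*d) : ℕ) : ℝ) +
            (2*d : ℝ) * Real.log (supC φ (Sum.inl w) : ℝ) := by
        calc max 0 (Real.log (placeAbs K (Sum.inl w) (resultantForms φ.a φ.b)))
            ≤ max 0 (Real.log (((Nat.factorial (2*d) : ℕ) : ℝ) *
                (supC φ (Sum.inl w) : ℝ) ^ (2*d))) :=
              maxlog_mono (w.1.nonneg _) hdet
          _ = Real.log ((Nat.factorial (2*d) : ℕ) : ℝ) +
                (2*d : ℝ) * Real.log (supC φ (Sum.inl w) : ℝ) := by
              rw [max_eq_right (Real.log_nonneg harg),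
                Real.log_mul (by positivity) (by positivity), Real.log_pow]
              push_cast
              ring
      calc placeWeight K (Sum.inl w) *
            max 0 (Real.log (placeAbs K (Sum.inl w) (resultantForms φ.a φ.b)))
          ≤ placeWeight K (Sum.inl w) *
            (Real.log ((Nat.factorial (2*d) : ℕ) : ℝ) +
              (2*d : ℝ) * Real.log (supC φ (Sum.inl w) : ℝ)) :=
            mul_le_mul_of_nonneg_left hmax hw
        _ = (2 * d : ℝ) * (placeWeight K (Sum.inl w) * Real.log (supC φ (Sum.inl w) : ℝ)) +
              placeWeight K (Sum.inl w) * Real.log ((Nat.factorial (2*d) : ℕ) : ℝ) := by ring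
  | inr v' =>
      have hdet : fAbs v' (resultantForms φ.a φ.b) ≤ (supC φ (Sum.inr v')) ^ (2*d) :=
        fAbs_det_le v' _ (fin_entry_le φ v')
      have hdet' : placeAbs K (Sum.inr v') (resultantForms φ.a φ.b) ≤
          (supC φ (Sum.inr v') : ℝ) ^ (2*d) := by
        rw [placeAbs_inr]
        exact_mod_cast hdet
      have hmax : max 0 (Real.log (placeAbs K (Sum.inr v') (resultantForms φ.a φ.b))) ≤
          (2*d : ℝ) * Real.log (supC φ (Sum.inr v') : ℝ) := by
        calc max 0 (Real.log (placeAbs K (Sum.inr v') (resultantForms φ.a φ.b)))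
            ≤ max 0 (Real.log ((supC φ (Sum.inr v') : ℝ) ^ (2*d))) :=
              maxlog_mono (placeAbs_nonneg _ _) hdet'
          _ = (2*d : ℝ) * Real.log (supC φ (Sum.inr v') : ℝ) := by
              rw [Real.log_pow, max_eq_right (by positivity)]
              push_cast
              ring
      have hfin : placeWeight K (Sum.inr v') *
            max 0 (Real.log (placeAbs K (Sum.inr v') (resultantForms φ.a φ.b)))
          ≤ (2 * d : ℝ) *
            (placeWeight K (Sum.inr v') * Real.log (supC φ (Sum.inr v') : ℝ)) := by
        calc placeWeight K (Sum.inr v') *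
              max 0 (Real.log (placeAbs K (Sum.inr v') (resultantForms φ.a φ.b)))
            ≤ placeWeight K (Sum.inr v') *
                ((2*d : ℝ) * Real.log (supC φ (Sum.inr v') : ℝ)) :=
              mul_le_mul_of_nonneg_left hmax hw
          _ = (2 * d : ℝ) *
                (placeWeight K (Sum.inr v') * Real.log (supC φ (Sum.inr v') : ℝ)) := by
              ring
      simpa using hfin

end ResAux

end ResultantAux

/-- **Lemma: height bound for the resultant.**
If `f₀, f₁` is a homogeneous presentation of a degree-`d ≥ 2` rational map `φ` over a number
field `K` in which at least one coefficient equals `1`, then the resultant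
`D = Res(f₀, f₁)` satisfies `h(D) ≤ (2d+2)·h(φ) + C·d·log d` for an absolute constant `C > 0`. -/
theorem height_resultant_le :
    ∃ C : ℝ, 0 < C ∧
      ∀ (K : Type) [Field K] [NumberField K] (d : ℕ), 2 ≤ d → ∀ (φ : RatMap K d),
        (∃ i : Fin (d+1), φ.a i = 1 ∨ φ.b i = 1) →
        heightK K (resultantForms φ.a φ.b) ≤
          (2 * (d : ℝ) + 2) * φ.height + C * (d : ℝ) * Real.log d := by
  refine ⟨4, by norm_num, ?_⟩
  intro K _ _ d hd φ hc
  classical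
  have hd1 : (1 : ℝ) ≤ (d : ℝ) := by exact_mod_cast Nat.one_le_of_lt hd
  have hlogd : 0 ≤ Real.log d := Real.log_nonneg hd1
  have hheight0 : 0 ≤ φ.height := by
    rw [ResAux.height_eq]
    exact finsum_nonneg fun v => mul_nonneg (ResAux.placeWeight_nonneg v)
      (Real.log_nonneg (ResAux.one_le_supC φ hc v))
  by_cases hD0 : resultantForms φ.a φ.b = 0
  · rw [hD0]
    have h0 : heightK K (0 : K) = 0 := by
      have hz : ∀ v : NFPlace K,
          placeWeight K v * max 0 (Real.log (placeAbs K v (0 : K))) = (0 : ℝ) := fun v => by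
        rw [ResAux.placeAbs_zero, Real.log_zero, max_self, mul_zero]
      calc heightK K (0 : K) = ∑ᶠ _v : NFPlace K, (0 : ℝ) := finsum_congr hz
        _ = 0 := finsum_zero
    rw [h0]
    have h1 : 0 ≤ (2 * (d : ℝ) + 2) * φ.height := by positivity
    have h2 : 0 ≤ 4 * (d : ℝ) * Real.log d := by positivity
    linarith
  · set c : Fin (d+1) ⊕ Fin (d+1) → K := Sum.elim φ.a φ.b with hcdef
    have hDfin := ResAux.fAbs_finite_support hD0
    have hifin : ∀ i, ({v : HeightOneSpectrum (𝓞 K) |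
        c i ≠ 0 ∧ ResAux.fAbs v (c i) ≠ 1}).Finite := by
      intro i
      by_cases h : c i = 0
      · refine Set.Finite.subset (Set.finite_empty) (fun v hv => absurd h hv.1)
      · exact (ResAux.fAbs_finite_support h).subset (fun v hv => hv.2)
    have hSfin : ({v | ResAux.fAbs v (resultantForms φ.a φ.b) ≠ 1} ∪
        ⋃ i, {v | c i ≠ 0 ∧ ResAux.fAbs v (c i) ≠ 1}).Finite :=
      hDfin.union (Set.finite_iUnion hifin)
    set T : Finset (NFPlace K) :=
      Finset.univ.image Sum.inl ∪ hSfin.toFinset.image Sum.inr with hT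
    have hinlT : ∀ w : NumberField.InfinitePlace K, Sum.inl w ∈ T := fun w =>
      Finset.mem_union_left _ (Finset.mem_image_of_mem _ (Finset.mem_univ w))
    have hnotT : ∀ v' : HeightOneSpectrum (𝓞 K), Sum.inr v' ∉ T →
        ResAux.fAbs v' (resultantForms φ.a φ.b) = 1 ∧
          ∀ i, c i ≠ 0 → ResAux.fAbs v' (c i) = 1 := by
      intro v' hv'
      have hmem : v' ∉ hSfin.toFinset := fun h =>
        hv' (Finset.mem_union_right _ (Finset.mem_image_of_mem _ h))
      rw [Set.Finite.mem_toFinset, Set.mem_union] at hmem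
      push_neg at hmem
      obtain ⟨h1, h2⟩ := hmem
      rw [Set.mem_iUnion] at h2
      push_neg at h2
      refine ⟨not_not.mp h1, fun i hi => ?_⟩
      have := h2 i
      rw [Set.mem_setOf_eq] at this
      push_neg at this
      exact this hi
    have hsuppD : (Function.support fun v : NFPlace K =>
        placeWeight K v * max 0 (Real.log (placeAbs K v (resultantForms φ.a φ.b)))) ⊆ ↑T := by
      intro v hv
      by_contra hvT
      cases v with
      | inl w => exact hvT (Finset.mem_coe.mpr (hinlT w))
      | inr v' =>
          obtain ⟨h1, _⟩ := hnotT v' (fun h => hvT (Finset.mem_coe.mpr h))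
          apply hv
          dsimp only
          rw [ResAux.placeAbs_inr, h1]
          simp
    have hsuppH : (Function.support fun v : NFPlace K =>
        placeWeight K v * Real.log ((ResAux.supC φ v : NNReal) : ℝ)) ⊆ ↑T := by
      intro v hv
      by_contra hvT
      cases v with
      | inl w => exact hvT (Finset.mem_coe.mpr (hinlT w))
      | inr v' =>
          obtain ⟨_, h2⟩ := hnotT v' (fun h => hvT (Finset.mem_coe.mpr h))
          apply hv
          dsimp only
          rw [ResAux.supC_eq_one φ hc v' h2, Real.log_one, mul_zero]
    have hHD : heightK K (resultantForms φ.a φ.b) = ∑ v ∈ T,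
        placeWeight K v * max 0 (Real.log (placeAbs K v (resultantForms φ.a φ.b))) :=
      finsum_eq_finset_sum_of_support_subset _ hsuppD
    have hHφ : φ.height = ∑ v ∈ T,
        placeWeight K v * Real.log ((ResAux.supC φ v : NNReal) : ℝ) := by
      rw [ResAux.height_eq]
      exact finsum_eq_finset_sum_of_support_subset _ hsuppH
    set L : ℝ := Real.log ((Nat.factorial (2*d) : ℕ) : ℝ) with hL
    have harch : (∑ v ∈ T, if v.isLeft then placeWeight K v * L else 0) = L := by
      have hsub : Finset.univ.image (Sum.inl : NumberField.InfinitePlace K → NFPlace K) ⊆ T :=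
        Finset.subset_union_left
      rw [← Finset.sum_subset hsub (fun v _ hvn => ?_)]
      · rw [Finset.sum_image (fun _ _ _ _ h => Sum.inl_injective h)]
        simp only [Sum.isLeft_inl, if_true]
        rw [← Finset.sum_mul, ResAux.sum_arch_weight, one_mul]
      · cases v with
        | inl w => exact absurd (Finset.mem_image_of_mem _ (Finset.mem_univ w)) hvn
        | inr v' => simp
    have hfactle : L ≤ 4 * (d : ℝ) * Real.log d := by
      have hfactpos : (0 : ℝ) < ((Nat.factorial (2*d) : ℕ) : ℝ) := by
        exact_mod_cast Nat.factorial_pos (2*d)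
      have hfle : ((Nat.factorial (2*d) : ℕ) : ℝ) ≤ ((2*d : ℕ) : ℝ) ^ (2*d) := by
        exact_mod_cast Nat.factorial_le_pow (2*d)
      have h1 : L ≤ Real.log (((2*d : ℕ) : ℝ) ^ (2*d)) := Real.log_le_log hfactpos hfle
      rw [Real.log_pow] at h1
      have hdpos : (0 : ℝ) < (d : ℝ) := lt_of_lt_of_le one_pos hd1
      have h2 : Real.log ((2*d : ℕ) : ℝ) ≤ 2 * Real.log d := by
        push_cast
        rw [Real.log_mul two_ne_zero hdpos.ne']
        have h3 : Real.log 2 ≤ Real.log d := Real.log_le_log two_pos (by exact_mod_cast hd)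
        linarith
      calc L ≤ (2*d : ℕ) * Real.log ((2*d : ℕ) : ℝ) := h1
        _ ≤ (2*d : ℕ) * (2 * Real.log d) := by
            refine mul_le_mul_of_nonneg_left h2 (by positivity)
        _ = 4 * (d : ℝ) * Real.log d := by push_cast; ring
    calc heightK K (resultantForms φ.a φ.b)
        = ∑ v ∈ T, placeWeight K v *
            max 0 (Real.log (placeAbs K v (resultantForms φ.a φ.b))) := hHD
      _ ≤ ∑ v ∈ T, ((2 * d : ℝ) *
            (placeWeight K v * Real.log ((ResAux.supC φ v : NNReal) : ℝ)) +
            (if v.isLeft then placeWeight K v * L else 0)) :=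
          Finset.sum_le_sum (fun v _ => ResAux.key_bound φ hc v)
      _ = (2 * d : ℝ) * (∑ v ∈ T,
            placeWeight K v * Real.log ((ResAux.supC φ v : NNReal) : ℝ)) + L := by
          rw [Finset.sum_add_distrib, ← Finset.mul_sum, harch]
      _ = (2 * d : ℝ) * φ.height + L := by rw [hHφ]
      _ ≤ (2 * (d : ℝ) + 2) * φ.height + 4 * (d : ℝ) * Real.log d := by
          have h1 : (2 * (d : ℝ)) * φ.height ≤ (2 * (d : ℝ) + 2) * φ.height :=
            mul_le_mul_of_nonneg_right (by linarith) hheight0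
          linarith
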